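/- The inequality δp ≥ θ̄·δB̲·z⁺ + θ̲·δB̄·z⁻ is valid on P₀ ∪ P₁ ∪ P₂, and hence on conv(P₀ ∪ P₁ ∪ P₂). -/
import Mathlib


abbrev Pt := ℝ × ℝ × ℝ × ℝ × ℝ

def P0 (tl tu : ℝ) : Set Pt :=
  {p | p.1 = 0 ∧ p.2.1 = 0 ∧ p.2.2.1 = 0 ∧ p.2.2.2.2 = 0 ∧ tl ≤ p.2.2.2.1 ∧ p.2.2.2.1 ≤ tu}

def P1 (tu bl bu : ℝ) : Set Pt :=
  {p | p.1 = 1 ∧ p.2.1 = 1 ∧ p.2.2.1 = 0 ∧ 0 ≤ p.2.2.2.1 ∧ p.2.2.2.1 ≤ tu ∧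
    bl * p.2.2.2.1 ≤ p.2.2.2.2 ∧ p.2.2.2.2 ≤ bu * p.2.2.2.1}

def P2 (tl bl bu : ℝ) : Set Pt :=
  {p | p.1 = 1 ∧ p.2.1 = 0 ∧ p.2.2.1 = 1 ∧ tl ≤ p.2.2.2.1 ∧ p.2.2.2.1 ≤ 0 ∧
    bu * p.2.2.2.1 ≤ p.2.2.2.2 ∧ p.2.2.2.2 ≤ bl * p.2.2.2.1}

theorem stmt_5 (tl tu bl bu : ℝ) (h1 : tl < 0) (h2 : 0 < tu) (h3 : bl < 0) (h4 : 0 < bu) :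
    (∀ p ∈ P0 tl tu ∪ P1 tu bl bu ∪ P2 tl bl bu,
      p.2.2.2.2 ≥ tu * bl * p.2.1 + tl * bu * p.2.2.1) ∧
    (∀ p ∈ convexHull ℝ (P0 tl tu ∪ P1 tu bl bu ∪ P2 tl bl bu),
      p.2.2.2.2 ≥ tu * bl * p.2.1 + tl * bu * p.2.2.1) := by
  have key : ∀ p ∈ P0 tl tu ∪ P1 tu bl bu ∪ P2 tl bl bu,
      p.2.2.2.2 ≥ tu * bl * p.2.1 + tl * bu * p.2.2.1 := by
    rintro p ((⟨a,b,c,d,e,f⟩|⟨a,b,c,d,e,f,g⟩)|⟨a,b,c,d,e,f,g⟩)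
    · rw [b, c, d]; ring_nf; rfl
    · rw [b, c]; nlinarith
    · rw [b, c]; nlinarith
  refine ⟨key, ?_⟩
  have hconv : Convex ℝ {p : Pt | tu * bl * p.2.1 + tl * bu * p.2.2.1 ≤ p.2.2.2.2} := by
    intro x hx y hy a b ha hb hab
    simp only [Set.mem_setOf_eq, Prod.smul_fst, Prod.smul_snd, Prod.fst_add, Prod.snd_add,
      smul_eq_mul] at *
    nlinarith
  intro p hp
  exact convexHull_min key hconv hp
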